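/- A relation R between the underlying sets of two affine join semilattices L and M (each with their induced convex algebra structure) is a convex relation if and only if whenever R(aᵢ, bᵢ) holds for a finite nonempty family, then R(⋁ᵢ aᵢ, ⋁ᵢ bᵢ); in particular it suffices that R is closed under binary joins: R(a,b) ∧ R(a',b') ⟹ R(a ⋁ a', b ⋁ b'). -/

import Mathlib

/-- A finitely supported formal convex combination (finite probability distribution). -/
def IsDist {A : Type*} (f : A →₀ ℝ) : Prop :=
  (∀ a, 0 ≤ f a) ∧ f.sum (fun _ p => p) = 1

/-- A convex algebra: a set with a mixing operation satisfying the unit and flattening laws. -/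
structure ConvexAlg (A : Type*) where
  mix : (A →₀ ℝ) → A
  mix_pure : ∀ a : A, mix (Finsupp.single a 1) = a
  mix_flatten : ∀ d : (A →₀ ℝ) →₀ ℝ, IsDist d → (∀ μ ∈ d.support, IsDist μ) →
    mix (d.sum fun μ p => p • μ) = mix (d.sum fun μ p => Finsupp.single (mix μ) p)

/-- The convex combination ∑ᵢ pᵢ aᵢ computed in a convex algebra. -/
noncomputable def ConvexAlg.mixFam {A : Type*} (c : ConvexAlg A) {n : ℕ}
    (p : Fin n → ℝ) (a : Fin n → A) : A :=
  c.mix (∑ i, Finsupp.single (a i) (p i))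

/-- A convex relation between convex algebras: closed under componentwise convex combinations. -/
def IsConvexRel {A B : Type*} (α : ConvexAlg A) (β : ConvexAlg B) (R : A → B → Prop) : Prop :=
  ∀ (n : ℕ) (p : Fin n → ℝ) (a : Fin n → A) (b : Fin n → B),
    (∀ i, 0 ≤ p i) → (∑ i, p i) = 1 → (∀ i, R (a i) (b i)) →
    R (α.mixFam p a) (β.mixFam p b)

/-- A convex subset: closed under finite convex combinations. -/
def IsConvexSubset {A : Type*} (α : ConvexAlg A) (S : Set A) : Prop :=
  ∀ (n : ℕ) (p : Fin n → ℝ) (a : Fin n → A),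
    (∀ i, 0 ≤ p i) → (∑ i, p i) = 1 → (∀ i, a i ∈ S) → α.mixFam p a ∈ S

/-- Relational composition. -/
def relComp {A B C : Type*} (R : A → B → Prop) (S : B → C → Prop) : A → C → Prop :=
  fun a c => ∃ b, R a b ∧ S b c

lemma sup_closed {L M : Type*} [SemilatticeSup L] [SemilatticeSup M]
    (R : L → M → Prop) (hbin : ∀ a b a' b', R a b → R a' b' → R (a ⊔ a') (b ⊔ b'))
    {ι : Type*} (s : Finset ι) (hs : s.Nonempty) (a : ι → L) (b : ι → M)
    (h : ∀ i ∈ s, R (a i) (b i)) : R (s.sup' hs a) (s.sup' hs b) := by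
  induction hs using Finset.Nonempty.cons_induction with
  | singleton i => simpa using h i (by simp)
  | cons i s hi hs ih =>
    rw [Finset.sup'_cons (H := hs), Finset.sup'_cons (H := hs)]
    exact hbin _ _ _ _ (h i (by simp)) (ih (fun j hj => h j (Finset.mem_cons_of_mem hj)))

lemma support_sum_single {L : Type*} [DecidableEq L] {n : ℕ} (p : Fin n → ℝ) (a : Fin n → L)
    (hp : ∀ i, 0 ≤ p i) :
    (∑ i, Finsupp.single (a i) (p i)).support
      = (Finset.univ.filter fun i => 0 < p i).image a := by
  classical
  ext x
  have hx : (∑ i, Finsupp.single (a i) (p i)) x = ∑ i, if a i = x then p i else 0 := by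
    rw [Finsupp.finset_sum_apply]
    exact Finset.sum_congr rfl fun i _ => Finsupp.single_apply
  simp only [Finsupp.mem_support_iff, hx, Finset.mem_image, Finset.mem_filter,
    Finset.mem_univ, true_and]
  constructor
  · intro hne
    by_contra hcon
    push_neg at hcon
    apply hne
    apply Finset.sum_eq_zero
    intro i _
    split_ifs with hia
    · exact ((hp i).lt_or_eq).elim (fun h => absurd hia (hcon i h)) (fun h => h.symm)
    · rfl
  · rintro ⟨i, hi, rfl⟩ h0
    have := (Finset.sum_eq_zero_iff_of_nonneg fun j _ => by
      split_ifs with h; exacts [hp j, le_refl 0]).mp h0 i (Finset.mem_univ i)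
    rw [if_pos rfl] at this
    exact hi.ne' this

lemma mixFam_eq_sup' {L : Type*} [SemilatticeSup L] (cL : ConvexAlg L)
    (hL : ∀ d : L →₀ ℝ, IsDist d → ∀ h : d.support.Nonempty, cL.mix d = d.support.sup' h id)
    {n : ℕ} (p : Fin n → ℝ) (a : Fin n → L)
    (hp : ∀ i, 0 ≤ p i) (hsum : ∑ i, p i = 1)
    (hs : (Finset.univ.filter fun i => 0 < p i).Nonempty) :
    cL.mixFam p a = (Finset.univ.filter fun i => 0 < p i).sup' hs a := by
  classical
  have hdist : IsDist (∑ i, Finsupp.single (a i) (p i)) := by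
    constructor
    · intro x
      rw [Finsupp.finset_sum_apply]
      exact Finset.sum_nonneg fun i _ => by
        rw [Finsupp.single_apply]; split <;> simp [hp i]
    · rw [← Finsupp.sum_finsetSum_index (fun _ => rfl) (fun _ _ _ => rfl)]
      rw [← hsum]
      exact Finset.sum_congr rfl fun i _ => Finsupp.sum_single_index rfl
  have hsupp := support_sum_single p a hp
  have hne : (∑ i, Finsupp.single (a i) (p i)).support.Nonempty := by
    rw [hsupp]; exact hs.image a
  rw [ConvexAlg.mixFam, hL _ hdist hne]
  apply le_antisymm
  · apply Finset.sup'_le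
    intro x hx
    rw [hsupp] at hx
    obtain ⟨i, hi, rfl⟩ := Finset.mem_image.mp hx
    exact Finset.le_sup' a hi
  · apply Finset.sup'_le
    intro i hi
    exact Finset.le_sup' id (by rw [hsupp]; exact Finset.mem_image_of_mem a hi)

lemma filter_nonempty_of_sum_one {n : ℕ} (p : Fin n → ℝ) (hp : ∀ i, 0 ≤ p i)
    (hsum : ∑ i, p i = 1) : (Finset.univ.filter fun i => 0 < p i).Nonempty := by
  by_contra h
  rw [Finset.not_nonempty_iff_eq_empty, Finset.filter_eq_empty_iff] at h
  have : ∑ i, p i = 0 := Finset.sum_eq_zero fun i _ =>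
    le_antisymm (not_lt.mp (h (Finset.mem_univ i))) (hp i)
  rw [hsum] at this; norm_num at this

lemma bin_to_conv {L M : Type*} [SemilatticeSup L] [SemilatticeSup M]
    (cL : ConvexAlg L) (cM : ConvexAlg M)
    (hL : ∀ d : L →₀ ℝ, IsDist d → ∀ h : d.support.Nonempty, cL.mix d = d.support.sup' h id)
    (hM : ∀ d : M →₀ ℝ, IsDist d → ∀ h : d.support.Nonempty, cM.mix d = d.support.sup' h id)
    (R : L → M → Prop) (hbin : ∀ a b a' b', R a b → R a' b' → R (a ⊔ a') (b ⊔ b')) :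
    IsConvexRel cL cM R := by
  intro n p a b hp hsum hR
  have hs := filter_nonempty_of_sum_one p hp hsum
  rw [mixFam_eq_sup' cL hL p a hp hsum hs, mixFam_eq_sup' cM hM p b hp hsum hs]
  exact sup_closed R hbin _ hs a b (fun i _ => hR i)

lemma sup2 {N : Type*} [SemilatticeSup N] (f : Fin 2 → N) :
    (Finset.univ : Finset (Fin 2)).sup' Finset.univ_nonempty f = f 0 ⊔ f 1 := by
  apply le_antisymm
  · exact Finset.sup'_le _ _ fun i _ => by fin_cases i <;> simp
  · exact sup_le (Finset.le_sup' f (Finset.mem_univ 0)) (Finset.le_sup' f (Finset.mem_univ 1))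

/-- a relation between the convex algebras induced by two affine join
semilattices is convex iff it is closed under joins of finite nonempty families; in
particular closure under binary joins suffices. -/
theorem semilattice_convexRel_iff {L M : Type*} [SemilatticeSup L] [SemilatticeSup M]
    (cL : ConvexAlg L) (cM : ConvexAlg M)
    (hL : ∀ d : L →₀ ℝ, IsDist d → ∀ h : d.support.Nonempty, cL.mix d = d.support.sup' h id)
    (hM : ∀ d : M →₀ ℝ, IsDist d → ∀ h : d.support.Nonempty, cM.mix d = d.support.sup' h id)
    (R : L → M → Prop) :
    (IsConvexRel cL cM R ↔
      ∀ (n : ℕ) (a : Fin (n + 1) → L) (b : Fin (n + 1) → M),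
        (∀ i, R (a i) (b i)) →
        R (Finset.univ.sup' Finset.univ_nonempty a) (Finset.univ.sup' Finset.univ_nonempty b)) ∧
    ((∀ a b a' b', R a b → R a' b' → R (a ⊔ a') (b ⊔ b')) → IsConvexRel cL cM R) := by
  refine ⟨⟨fun hconv n a b hab => ?_, fun H => ?_⟩, fun hbin => bin_to_conv cL cM hL hM R hbin⟩
  · set p : Fin (n + 1) → ℝ := fun _ => ((n : ℝ) + 1)⁻¹ with hpdef
    have hn : ((n : ℝ) + 1) ≠ 0 := by positivity
    have hp : ∀ i, 0 ≤ p i := fun i => by positivity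
    have hsum : ∑ i, p i = 1 := by
      simp [hpdef, Finset.sum_const, Finset.card_univ, mul_inv_cancel₀ hn]
    have hs : (Finset.univ.filter fun i => 0 < p i) = (Finset.univ : Finset (Fin (n+1))) :=
      Finset.filter_true_of_mem fun i _ => by positivity
    have hs' : (Finset.univ.filter fun i => 0 < p i).Nonempty :=
      filter_nonempty_of_sum_one p hp hsum
    have key := hconv (n + 1) p a b hp hsum hab
    rw [mixFam_eq_sup' cL hL p a hp hsum hs', mixFam_eq_sup' cM hM p b hp hsum hs'] at key
    simp only [hs] at key
    exact key
  · apply bin_to_conv cL cM hL hM R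
    intro a b a' b' h h'
    have := H 1 ![a, a'] ![b, b'] (fun i => by fin_cases i <;> simpa)
    simpa [sup2] using this
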